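/- Let Z be a base of a pointed generating cone C in a real vector space V, and suppose x, y ∈ Z and t ∈ [0,1) are such that y - t·x ∈ C. Then y - t·x = (1-t)·z for some z ∈ Z, i.e., the unique scaling factor of y - t·x with respect to the base Z is exactly 1 - t. -/
import Mathlib


open Pointwise

theorem base_scaling_factor {V : Type*} [AddCommGroup V] [Module ℝ V]
    (C Z : Set V)
    (hCconv : Convex ℝ C) (hCscale : ∀ v ∈ C, ∀ α : ℝ, 0 ≤ α → α • v ∈ C)
    (hpointed : C ∩ (-C) = {0})
    (hgen : ∀ v : V, ∃ a ∈ C, ∃ b ∈ C, v = a - b)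
    (hZC : Z ⊆ C) (hZconv : Convex ℝ Z)
    (hbase : ∀ v ∈ C, v ≠ (0 : V) → ∃! p : ℝ × V, 0 < p.1 ∧ p.2 ∈ Z ∧ v = p.1 • p.2)
    (x y : V) (hx : x ∈ Z) (hy : y ∈ Z)
    (t : ℝ) (ht0 : 0 ≤ t) (ht1 : t < 1) (hmem : y - t • x ∈ C) :
    ∃ z ∈ Z, y - t • x = (1 - t) • z := by
  by_cases hw0 : y - t • x = 0
  · have hy0 : y = t • x := by rwa [sub_eq_zero] at hw0
    by_cases hx0 : x = 0
    · refine ⟨x, hx, ?_⟩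
      rw [hw0, hx0, smul_zero]
    · exfalso
      by_cases ht : t = 0
      · -- then y = 0 ∈ Z; contradiction with uniqueness at x
        have h0Z : (0 : V) ∈ Z := by
          have : y = 0 := by rw [hy0, ht, zero_smul]
          rwa [this] at hy
        obtain ⟨p, _, hpuniq⟩ := hbase x (hZC hx) hx0
        have h1 : ((1 : ℝ), x) = p := hpuniq (1, x) ⟨one_pos, hx, (one_smul ℝ x).symm⟩
        have hhalf : (1 / 2 : ℝ) • x ∈ Z := by
          have := hZconv hx h0Z (by norm_num : (0:ℝ) ≤ 1/2) (by norm_num : (0:ℝ) ≤ 1/2)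
            (by norm_num)
          simpa using this
        have h2 : ((2 : ℝ), (1 / 2 : ℝ) • x) = p :=
          hpuniq (2, (1/2 : ℝ) • x) ⟨two_pos, hhalf, by rw [smul_smul]; norm_num⟩
        rw [← h1] at h2
        have : (2 : ℝ) = 1 := congrArg Prod.fst h2
        norm_num at this
      · have htpos : 0 < t := lt_of_le_of_ne ht0 (Ne.symm ht)
        have hyne : y ≠ 0 := by
          rw [hy0]; exact smul_ne_zero (ne_of_gt htpos) hx0
        obtain ⟨q, _, hquniq⟩ := hbase y (hZC hy) hyne
        have h1 : ((1 : ℝ), y) = q := hquniq (1, y) ⟨one_pos, hy, (one_smul ℝ y).symm⟩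
        have h2 : ((t : ℝ), x) = q := hquniq (t, x) ⟨htpos, hx, hy0⟩
        rw [← h1] at h2
        have : t = 1 := congrArg Prod.fst h2
        linarith
  · obtain ⟨⟨α, z⟩, ⟨hα, hzZ, hwz⟩, _⟩ := hbase (y - t • x) hmem hw0
    have hyne : y ≠ 0 := by
      intro h
      have hneg : y - t • x = -(t • x) := by rw [h, zero_sub]
      have htx : t • x ∈ C := hCscale x (hZC hx) t ht0
      have hmem2 : y - t • x ∈ C ∩ (-C) := ⟨hmem, by rw [hneg]; exact Set.neg_mem_neg.mpr htx⟩
      rw [hpointed] at hmem2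
      exact hw0 hmem2
    obtain ⟨q, _, hquniq⟩ := hbase y (hZC hy) hyne
    have hsum : 0 < α + t := by linarith
    have huZ : (α / (α + t)) • z + (t / (α + t)) • x ∈ Z :=
      hZconv hzZ hx (by positivity) (by positivity) (by field_simp)
    have hyeq : y = α • z + t • x := by
      have : y - t • x + t • x = α • z + t • x := by rw [hwz]
      simpa using this
    have hyu : y = (α + t) • ((α / (α + t)) • z + (t / (α + t)) • x) := by
      rw [smul_add, smul_smul, smul_smul]
      rw [mul_div_cancel₀ _ (ne_of_gt hsum), mul_div_cancel₀ _ (ne_of_gt hsum)]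
      exact hyeq
    have h1 : ((1 : ℝ), y) = q := hquniq (1, y) ⟨one_pos, hy, (one_smul ℝ y).symm⟩
    have h2 : (α + t, (α / (α + t)) • z + (t / (α + t)) • x) = q :=
      hquniq _ ⟨hsum, huZ, hyu⟩
    rw [← h1] at h2
    have hα1 : α + t = 1 := congrArg Prod.fst h2
    refine ⟨z, hzZ, ?_⟩
    rw [hwz]
    congr 1
    linarith
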